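/- Let H be an n×n real symmetric matrix with eigenvalues λ_1 ≤ ⋯ ≤ λ_n (counted with multiplicity) and corresponding orthonormal eigenvectors φ_1, …, φ_n, let 1 ≤ N < n, β > 0, and let μ ∈ ℝ satisfy Σ_{i=1}^n (1 + exp(β(λ_i − μ)))⁻¹ = N. Set ρ_i = (1 + exp(β(λ_i − μ)))⁻¹, P_{β,∞} = Σ_{i=1}^n ρ_i φ_iφ_iᵀ, and M = Σ_{i=1}^n max(β⁻¹, |λ_i − μ|) φ_iφ_iᵀ. If η > 0 and P_{β,η} ∈ C_N minimizes P ↦ E_β(P) + η⁻¹‖P‖₁ over C_N, then tr( M (P_{β,η} − P_{β,∞})² ) ≤ η⁻¹‖P_{β,∞}‖₁. -/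

import Mathlib

open Matrix BigOperators Real

/-- Entrywise ℓ¹ norm of a real matrix. -/
noncomputable def l1Norm {n : ℕ} (P : Matrix (Fin n) (Fin n) ℝ) : ℝ :=
  ∑ i, ∑ j, |P i j|

open scoped Classical in
/-- The Fermi–Dirac entropy `S(P) = ∑_i (σ_i ln σ_i + (1−σ_i) ln(1−σ_i))` of a
symmetric matrix, computed from its eigenvalues `σ_i` (with `0 ln 0 = 0`,
which holds automatically since `Real.log 0 = 0`). -/
noncomputable def matEntropy {n : ℕ} (P : Matrix (Fin n) (Fin n) ℝ) : ℝ :=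
  if h : P.IsHermitian then
    ∑ i, (h.eigenvalues i * Real.log (h.eigenvalues i) +
      (1 - h.eigenvalues i) * Real.log (1 - h.eigenvalues i))
  else 0

/-- The free energy at inverse temperature `β`:
`E_β(P) = tr(HP) + β⁻¹ S(P)`. -/
noncomputable def freeEnergy {n : ℕ} (β : ℝ) (H P : Matrix (Fin n) (Fin n) ℝ) : ℝ :=
  (H * P).trace + β⁻¹ * matEntropy P

/-- The convex set of admissible density matrices: symmetric, trace `N`,
with both `P` and `1 - P` positive semidefinite. -/
def CN (n N : ℕ) : Set (Matrix (Fin n) (Fin n) ℝ) :=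
  {P | P.IsSymm ∧ P.trace = (N : ℝ) ∧ P.PosSemidef ∧
    ((1 : Matrix (Fin n) (Fin n) ℝ) - P).PosSemidef}


noncomputable def fent (x : ℝ) : ℝ := x * Real.log x + (1 - x) * Real.log (1 - x)
noncomputable def fdv (x : ℝ) : ℝ := Real.log x - Real.log (1 - x)

lemma fent_cont : Continuous fent := by
  have h1 : Continuous fun x : ℝ => x * Real.log x := Real.continuous_mul_log
  have h2 : Continuous fun x : ℝ => (1 - x) * Real.log (1 - x) :=
    h1.comp (continuous_const.sub continuous_id)
  exact h1.add h2

lemma fent_hasDeriv {x : ℝ} (h0 : 0 < x) (h1 : x < 1) : HasDerivAt fent (fdv x) x := by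
  have hinner : HasDerivAt (fun y : ℝ => 1 - y) (-1) x := by
    simpa using (hasDerivAt_id x).const_sub 1
  have hA : HasDerivAt (fun y : ℝ => y * Real.log y) (Real.log x + 1) x :=
    Real.hasDerivAt_mul_log (ne_of_gt h0)
  have hB : HasDerivAt (fun y : ℝ => (1 - y) * Real.log (1 - y))
      ((Real.log (1 - x) + 1) * (-1)) x :=
    (Real.hasDerivAt_mul_log (by linarith : (1:ℝ) - x ≠ 0)).comp x hinner
  have := hA.add hB
  refine this.congr_deriv ?_
  simp [fdv]; ring

lemma fdv_hasDeriv {x : ℝ} (h0 : 0 < x) (h1 : x < 1) :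
    HasDerivAt fdv (x⁻¹ + (1 - x)⁻¹) x := by
  have hinner : HasDerivAt (fun y : ℝ => 1 - y) (-1) x := by
    simpa using (hasDerivAt_id x).const_sub 1
  have hA : HasDerivAt Real.log x⁻¹ x := Real.hasDerivAt_log (ne_of_gt h0)
  have hB : HasDerivAt (fun y : ℝ => Real.log (1 - y)) ((1 - x)⁻¹ * (-1)) x :=
    (Real.hasDerivAt_log (by linarith : (1:ℝ) - x ≠ 0)).comp x hinner
  have := hA.sub hB
  refine this.congr_deriv ?_
  ring

/-- a differentiable function with monotone derivative vanishing at `r` has a minimum at `r`. -/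
lemma min_at_root (f f' : ℝ → ℝ) (x y r : ℝ) (hr : r ∈ Set.Icc x y)
    (hf : ∀ t ∈ Set.Icc x y, HasDerivAt f (f' t) t)
    (hmono : MonotoneOn f' (Set.Icc x y)) (hr0 : f' r = 0) :
    ∀ p ∈ Set.Icc x y, f r ≤ f p := by
  intro p hp
  rcases le_total p r with hpr | hpr
  · have hsub : Set.Icc p r ⊆ Set.Icc x y := Set.Icc_subset_Icc hp.1 hr.2
    have h1 : AntitoneOn f (Set.Icc p r) := by
      apply antitoneOn_of_deriv_nonpos (convex_Icc p r)
      · exact fun t ht => (hf t (hsub ht)).continuousAt.continuousWithinAt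
      · intro t ht
        rw [interior_Icc] at ht
        exact (hf t (hsub (Set.Ioo_subset_Icc_self ht))).differentiableAt.differentiableWithinAt
      · intro t ht
        rw [interior_Icc] at ht
        rw [(hf t (hsub (Set.Ioo_subset_Icc_self ht))).deriv]
        have := hmono (hsub (Set.Ioo_subset_Icc_self ht)) hr (le_of_lt ht.2)
        linarith [hr0 ▸ this]
    exact h1 ⟨le_refl p, hpr⟩ ⟨hpr, le_refl r⟩ hpr
  · have hsub : Set.Icc r p ⊆ Set.Icc x y := Set.Icc_subset_Icc hr.1 hp.2
    have h1 : MonotoneOn f (Set.Icc r p) := by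
      apply monotoneOn_of_deriv_nonneg (convex_Icc r p)
      · exact fun t ht => (hf t (hsub ht)).continuousAt.continuousWithinAt
      · intro t ht
        rw [interior_Icc] at ht
        exact (hf t (hsub (Set.Ioo_subset_Icc_self ht))).differentiableAt.differentiableWithinAt
      · intro t ht
        rw [interior_Icc] at ht
        rw [(hf t (hsub (Set.Ioo_subset_Icc_self ht))).deriv]
        have := hmono hr (hsub (Set.Ioo_subset_Icc_self ht)) (le_of_lt ht.1)
        linarith [hr0 ▸ this]
    exact h1 ⟨le_refl r, hpr⟩ ⟨hpr, le_refl p⟩ hpr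

set_option maxHeartbeats 1000000 in
lemma scalar_half (q : ℝ) (hq0 : 0 < q) (hq2 : q ≤ 1/2) :
    ∀ p ∈ Set.Icc (0:ℝ) 1,
      max 1 (Real.log (1-q) - Real.log q) * (p - q)^2
        ≤ fent p - fent q - fdv q * (p - q) := by
  have hq1 : q < 1 := by linarith
  set L : ℝ := Real.log (1-q) - Real.log q with hLdef
  have hL0 : 0 ≤ L := sub_nonneg.2 (Real.log_le_log hq0 (by linarith))
  set c : ℝ := max 1 L with hcdef
  have hc1 : (1:ℝ) ≤ c := le_max_left _ _
  have hcL : L ≤ c := le_max_right _ _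
  have hc0 : (0:ℝ) < c := lt_of_lt_of_le one_pos hc1
  set ψ : ℝ → ℝ := fun p => fent p - fent q - fdv q * (p - q) - c * (p - q)^2 with hψdef
  set dψ : ℝ → ℝ := fun p => fdv p - fdv q - 2*c*(p - q) with hdψdef
  have hψd : ∀ t ∈ Set.Ioo (0:ℝ) 1, HasDerivAt ψ (dψ t) t := by
    intro t ht
    have h1 : HasDerivAt (fun p : ℝ => fdv q * (p - q)) (fdv q) t := by
      simpa using ((hasDerivAt_id t).sub_const q).const_mul (fdv q)
    have h2 : HasDerivAt (fun p : ℝ => c * (p - q)^2) (c * (2*(t - q))) t := by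
      have := (((hasDerivAt_id t).sub_const q).pow 2).const_mul c
      refine this.congr_deriv ?_
      simp only [id_eq]
      ring
    have := (((fent_hasDeriv ht.1 ht.2).sub_const (fent q)).sub h1).sub h2
    refine this.congr_deriv ?_
    simp only [hdψdef]; ring
  have hdψd : ∀ t ∈ Set.Ioo (0:ℝ) 1, HasDerivAt dψ (t⁻¹ + (1-t)⁻¹ - 2*c) t := by
    intro t ht
    have h1 : HasDerivAt (fun p : ℝ => 2*c*(p - q)) (2*c) t := by
      simpa using ((hasDerivAt_id t).sub_const q).const_mul (2*c)
    have := ((fdv_hasDeriv ht.1 ht.2).sub_const (fdv q)).sub h1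
    exact this
  have hdψq : dψ q = 0 := by simp [hdψdef]
  have hψq : ψ q = 0 := by simp [hψdef]
  have hmonod : ∀ x y : ℝ, 0 < x → y < 1 →
      (∀ t, x ≤ t → t ≤ y → 2*c*(t*(1-t)) ≤ 1) → MonotoneOn dψ (Set.Icc x y) := by
    intro x y hx hy hcond
    apply monotoneOn_of_deriv_nonneg (convex_Icc x y)
    · intro t ht
      exact (hdψd t ⟨lt_of_lt_of_le hx ht.1, lt_of_le_of_lt ht.2 hy⟩).continuousAt.continuousWithinAt
    · intro t ht
      rw [interior_Icc] at ht
      exact (hdψd t ⟨lt_of_lt_of_le hx (le_of_lt ht.1),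
        lt_of_le_of_lt (le_of_lt ht.2) hy⟩).differentiableAt.differentiableWithinAt
    · intro t ht
      rw [interior_Icc] at ht
      have ht0 : 0 < t := lt_of_lt_of_le hx (le_of_lt ht.1)
      have ht1 : t < 1 := lt_of_le_of_lt (le_of_lt ht.2) hy
      rw [(hdψd t ⟨ht0, ht1⟩).deriv]
      have htt : 0 < t * (1 - t) := by nlinarith
      have h1t : (1:ℝ) - t ≠ 0 := by linarith
      have hsum : t⁻¹ + (1-t)⁻¹ = (t*(1-t))⁻¹ := by
        field_simp; ring
      have hcnd := hcond t (le_of_lt ht.1) (le_of_lt ht.2)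
      have : 2*c ≤ (t*(1-t))⁻¹ := by
        rw [inv_eq_one_div, le_div_iff₀ htt]; linarith
      rw [hsum]; linarith
  have hantid : ∀ x y : ℝ, 0 < x → y < 1 →
      (∀ t, x ≤ t → t ≤ y → 1 ≤ 2*c*(t*(1-t))) → AntitoneOn dψ (Set.Icc x y) := by
    intro x y hx hy hcond
    apply antitoneOn_of_deriv_nonpos (convex_Icc x y)
    · intro t ht
      exact (hdψd t ⟨lt_of_lt_of_le hx ht.1, lt_of_le_of_lt ht.2 hy⟩).continuousAt.continuousWithinAt
    · intro t ht
      rw [interior_Icc] at ht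
      exact (hdψd t ⟨lt_of_lt_of_le hx (le_of_lt ht.1),
        lt_of_le_of_lt (le_of_lt ht.2) hy⟩).differentiableAt.differentiableWithinAt
    · intro t ht
      rw [interior_Icc] at ht
      have ht0 : 0 < t := lt_of_lt_of_le hx (le_of_lt ht.1)
      have ht1 : t < 1 := lt_of_le_of_lt (le_of_lt ht.2) hy
      rw [(hdψd t ⟨ht0, ht1⟩).deriv]
      have htt : 0 < t * (1 - t) := by nlinarith
      have h1t : (1:ℝ) - t ≠ 0 := by linarith
      have hsum : t⁻¹ + (1-t)⁻¹ = (t*(1-t))⁻¹ := by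
        field_simp; ring
      have hcnd := hcond t (le_of_lt ht.1) (le_of_lt ht.2)
      have : (t*(1-t))⁻¹ ≤ 2*c := by
        rw [inv_eq_one_div, div_le_iff₀ htt]; linarith
      rw [hsum]; linarith
  have hψmono : ∀ x y : ℝ, 0 < x → y < 1 →
      (∀ t, x < t → t < y → 0 ≤ dψ t) → MonotoneOn ψ (Set.Icc x y) := by
    intro x y hx hy hcond
    apply monotoneOn_of_deriv_nonneg (convex_Icc x y)
    · intro t ht
      exact (hψd t ⟨lt_of_lt_of_le hx ht.1, lt_of_le_of_lt ht.2 hy⟩).continuousAt.continuousWithinAt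
    · intro t ht
      rw [interior_Icc] at ht
      exact (hψd t ⟨lt_of_lt_of_le hx (le_of_lt ht.1),
        lt_of_le_of_lt (le_of_lt ht.2) hy⟩).differentiableAt.differentiableWithinAt
    · intro t ht
      rw [interior_Icc] at ht
      rw [(hψd t ⟨lt_of_lt_of_le hx (le_of_lt ht.1),
        lt_of_le_of_lt (le_of_lt ht.2) hy⟩).deriv]
      exact hcond t ht.1 ht.2
  have hψanti : ∀ x y : ℝ, 0 < x → y < 1 →
      (∀ t, x < t → t < y → dψ t ≤ 0) → AntitoneOn ψ (Set.Icc x y) := by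
    intro x y hx hy hcond
    apply antitoneOn_of_deriv_nonpos (convex_Icc x y)
    · intro t ht
      exact (hψd t ⟨lt_of_lt_of_le hx ht.1, lt_of_le_of_lt ht.2 hy⟩).continuousAt.continuousWithinAt
    · intro t ht
      rw [interior_Icc] at ht
      exact (hψd t ⟨lt_of_lt_of_le hx (le_of_lt ht.1),
        lt_of_le_of_lt (le_of_lt ht.2) hy⟩).differentiableAt.differentiableWithinAt
    · intro t ht
      rw [interior_Icc] at ht
      rw [(hψd t ⟨lt_of_lt_of_le hx (le_of_lt ht.1),
        lt_of_le_of_lt (le_of_lt ht.2) hy⟩).deriv]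
      exact hcond t ht.1 ht.2
  have key : ∀ p ∈ Set.Ioo (0:ℝ) 1, 0 ≤ ψ p := by
    rcases le_or_gt c 2 with hcase | hcase
    · -- convex case : 2c ≤ 4 ≤ 1/(t(1-t))
      intro p hp
      have hx : 0 < min p q := lt_min hp.1 hq0
      have hy : max p q < 1 := max_lt hp.2 hq1
      have hmono := hmonod (min p q) (max p q) hx hy (by
        intro t h1 h2
        have ht0 : 0 ≤ t := le_trans (le_of_lt hx) h1
        have ht1 : t ≤ 1 := le_trans h2 (le_of_lt hy)
        nlinarith [sq_nonneg (2*t - 1)])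
      have := min_at_root ψ dψ (min p q) (max p q) q
        ⟨min_le_right _ _, le_max_right _ _⟩
        (fun t ht => hψd t ⟨lt_of_lt_of_le hx ht.1, lt_of_le_of_lt ht.2 hy⟩)
        hmono hdψq p ⟨min_le_left _ _, le_max_left _ _⟩
      rw [hψq] at this
      exact this
    · -- c = L > 2
      have hcL2 : c = L := by
        rcases max_choice 1 L with h | h
        · exfalso; rw [hcdef] at hcase; rw [h] at hcase; norm_num at hcase
        · rw [hcdef, h]
      set s : ℝ := Real.sqrt (1 - 2/c) with hsdef
      have h2c : 0 < 2/c := by positivity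
      have h2c1 : 2/c < 1 := by rw [div_lt_one hc0]; linarith
      have hs0 : 0 ≤ s := Real.sqrt_nonneg _
      have hs2 : s^2 = 1 - 2/c := Real.sq_sqrt (by linarith)
      have hs1 : s < 1 := by nlinarith
      set a : ℝ := (1 - s)/2 with hadef
      have ha0 : 0 < a := by rw [hadef]; linarith
      have ha12 : a ≤ 1/2 := by rw [hadef]; linarith
      have haa : 2*c*(a*(1-a)) = 1 := by
        have h1 : a*(1-a) = (1 - s^2)/4 := by rw [hadef]; ring
        rw [h1, hs2]
        field_simp <;> ring
      -- 2 c q (1-q) ≤ 1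
      have hlogq : Real.log (1/q) ≤ 1/(Real.exp 1 * q) := by
        have h1 : Real.log (1/q) = Real.log (1/(Real.exp 1 * q)) + 1 := by
          rw [one_div, one_div, Real.log_inv, Real.log_inv, Real.log_mul
            (ne_of_gt (Real.exp_pos 1)) (ne_of_gt hq0), Real.log_exp]
          ring
        have h2 : Real.log (1/(Real.exp 1 * q)) ≤ 1/(Real.exp 1 * q) - 1 :=
          Real.log_le_sub_one_of_pos (by positivity)
        linarith
      have hLlog : L ≤ Real.log (1/q) := by
        rw [hLdef, one_div, Real.log_inv]
        have : Real.log (1-q) ≤ 0 := Real.log_nonpos (by linarith) (by linarith)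
        linarith
      have he2 : (2:ℝ) ≤ Real.exp 1 := by
        have := Real.add_one_le_exp 1
        linarith
      have hu : 2*c*(q*(1-q)) ≤ 1 := by
        rw [hcL2]
        have h1 : L * q ≤ 1/(Real.exp 1) := by
          have := mul_le_mul_of_nonneg_right (le_trans hLlog hlogq) (le_of_lt hq0)
          calc L * q ≤ 1/(Real.exp 1 * q) * q := this
          _ = 1/(Real.exp 1) := by field_simp <;> ring
        have hexp : 0 < Real.exp 1 := Real.exp_pos 1
        have h2 : 1/(Real.exp 1) ≤ 1/2 := by
          rw [div_le_div_iff₀ hexp (by norm_num)]; linarith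
        have h3 : L*q*(1-q) ≤ 1/2*(1-q) :=
          mul_le_mul_of_nonneg_right (le_trans h1 h2) (by linarith)
        nlinarith
      have hqa : q ≤ a := by
        by_contra hcon
        push_neg at hcon
        have hd : 0 < (q-a)*(1-q-a) := mul_pos (by linarith) (by linarith)
        nlinarith [mul_pos hc0 hd, hu, haa]
      -- region B1 : p ≤ a
      have hB1 : ∀ p ∈ Set.Ioo (0:ℝ) 1, p ≤ a → 0 ≤ ψ p := by
        intro p hp hpa
        have hx : 0 < min p q := lt_min hp.1 hq0
        have hmono := hmonod (min p q) a hx (by linarith) (by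
          intro t h1 h2
          have hd : 0 ≤ (a-t)*(1-a-t) := mul_nonneg (by linarith) (by linarith)
          nlinarith [mul_nonneg hc0.le hd, haa])
        have := min_at_root ψ dψ (min p q) a q ⟨min_le_right _ _, hqa⟩
          (fun t ht => hψd t ⟨lt_of_lt_of_le hx ht.1,
            lt_of_le_of_lt ht.2 (by linarith)⟩)
          hmono hdψq p ⟨min_le_left _ _, hpa⟩
        rw [hψq] at this
        exact this
      have hψa : 0 ≤ ψ a := hB1 a ⟨ha0, by linarith⟩ le_rfl
      have hfent_sym : fent (1-q) = fent q := by
        simp only [fent, sub_sub_cancel]; ring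
      have hfdvq : fdv q = -L := by simp only [fdv, hLdef]; ring
      have hfdv1q : fdv (1-q) = L := by simp only [fdv, sub_sub_cancel, hLdef]
      have hψ1q : ψ (1-q) = 2*q*L*(1-2*q) := by
        simp only [hψdef, hfent_sym, hfdvq, hcL2]
        ring
      have hdψ1q : dψ (1-q) = 4*L*q := by
        simp only [hdψdef, hfdvq, hfdv1q, hcL2]
        ring
      -- region B2 : 1 - a ≤ p < 1
      have hB2 : ∀ p, 1 - a ≤ p → p < 1 → 0 ≤ ψ p := by
        intro p hpa hp1
        set χ : ℝ → ℝ := fun t => ψ t - ψ (1-q) - dψ (1-q) * (t - (1-q)) with hχdef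
        set dχ : ℝ → ℝ := fun t => dψ t - dψ (1-q) with hdχdef
        have hx : 0 < min p (1-q) := lt_min (by linarith) (by linarith)
        have hy : max p (1-q) < 1 := max_lt hp1 (by linarith)
        have hxge : 1 - a ≤ min p (1-q) := le_min hpa (by linarith)
        have hmonodψ := hmonod (min p (1-q)) (max p (1-q)) hx hy (by
          intro t h1 h2
          have hta : 1 - a ≤ t := le_trans hxge h1
          have ht1 : t ≤ 1 := le_trans h2 (le_of_lt hy)
          have hd : 0 ≤ (t-(1-a))*(t-a) := mul_nonneg (by linarith) (by linarith)
          nlinarith [mul_nonneg hc0.le hd, haa])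
        have hmonodχ : MonotoneOn dχ (Set.Icc (min p (1-q)) (max p (1-q))) := by
          intro u hu v hv huv
          have := hmonodψ hu hv huv
          simp only [hdχdef]
          linarith
        have hχd : ∀ t ∈ Set.Icc (min p (1-q)) (max p (1-q)), HasDerivAt χ (dχ t) t := by
          intro t ht
          have ht' : t ∈ Set.Ioo (0:ℝ) 1 :=
            ⟨lt_of_lt_of_le hx ht.1, lt_of_le_of_lt ht.2 hy⟩
          have hlin : HasDerivAt (fun t : ℝ => dψ (1-q) * (t - (1-q))) (dψ (1-q)) t := by
            simpa using ((hasDerivAt_id t).sub_const (1-q)).const_mul (dψ (1-q))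
          exact ((hψd t ht').sub_const (ψ (1-q))).sub hlin
        have hχ0 : dχ (1-q) = 0 := by simp [hdχdef]
        have := min_at_root χ dχ (min p (1-q)) (max p (1-q)) (1-q)
          ⟨min_le_right _ _, le_max_right _ _⟩ hχd hmonodχ hχ0
          p ⟨min_le_left _ _, le_max_left _ _⟩
        have hχ1q : χ (1-q) = 0 := by simp [hχdef]
        rw [hχ1q] at this
        -- this : 0 ≤ χ p
        have hexp : ψ p ≥ ψ (1-q) + dψ (1-q) * (p - (1-q)) := by
          simp only [hχdef] at this
          linarith
        rw [hψ1q, hdψ1q] at hexp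
        have hp12 : 1/2 ≤ p := by linarith
        have hL2 : 2 < L := hcL2 ▸ hcase
        have hnn : 0 ≤ 2*q*L*(2*p-1) :=
          mul_nonneg (mul_nonneg (mul_nonneg (by norm_num) hq0.le) (by linarith)) (by linarith)
        nlinarith
      have hψ1a : 0 ≤ ψ (1-a) := hB2 (1-a) le_rfl (by linarith)
      intro p hp
      rcases le_total p a with hpa | hpa
      · exact hB1 p hp hpa
      rcases le_total (1-a) p with hpb | hpb
      · exact hB2 p hpb hp.2
      -- a ≤ p ≤ 1-a
      have hanti := hantid a (1-a) ha0 (by linarith) (by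
        intro t h1 h2
        have hd : 0 ≤ (t-a)*(1-a-t) := mul_nonneg (by linarith) (by linarith)
        nlinarith [mul_nonneg hc0.le hd, haa])
      rcases le_or_gt 0 (dψ p) with hsign | hsign
      · have hmψ := hψmono a p ha0 (by linarith) (by
          intro t h1 h2
          have ht : t ∈ Set.Icc a (1-a) := ⟨le_of_lt h1, by linarith⟩
          have hpmem : p ∈ Set.Icc a (1-a) := ⟨hpa, hpb⟩
          have := hanti ht hpmem (le_of_lt h2)
          linarith)
        have := hmψ ⟨le_refl a, hpa⟩ ⟨hpa, le_refl p⟩ hpa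
        linarith
      · have hmψ := hψanti p (1-a) hp.1 (by linarith) (by
          intro t h1 h2
          have ht : t ∈ Set.Icc a (1-a) := ⟨by linarith, le_of_lt h2⟩
          have hpmem : p ∈ Set.Icc a (1-a) := ⟨hpa, hpb⟩
          have := hanti hpmem ht (le_of_lt h1)
          linarith)
        have := hmψ ⟨le_refl p, hpb⟩ ⟨hpb, le_refl (1-a)⟩ hpb
        linarith
  -- extend to the closed interval by continuity
  intro p hp
  have hcont : Continuous ψ := by
    simp only [hψdef]
    exact ((fent_cont.sub continuous_const).sub
      (continuous_const.mul (continuous_id.sub continuous_const))).sub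
      (continuous_const.mul ((continuous_id.sub continuous_const).pow 2))
  have hcl : ∀ x ∈ closure (Set.Ioo (0:ℝ) 1), (fun _ => (0:ℝ)) x ≤ ψ x := by
    intro x hx
    exact le_on_closure key continuous_const.continuousOn hcont.continuousOn hx
  rw [closure_Ioo (by norm_num : (0:ℝ) ≠ 1)] at hcl
  have := hcl p hp
  simp only [hψdef] at this
  linarith

lemma scalar_main (q p : ℝ) (hq0 : 0 < q) (hq1 : q < 1) (hp0 : 0 ≤ p) (hp1 : p ≤ 1) :
    max 1 |Real.log q - Real.log (1-q)| * (p - q)^2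
      ≤ fent p - fent q - fdv q * (p - q) := by
  rcases le_or_gt q (1/2) with hq2 | hq2
  · have h := scalar_half q hq0 hq2 p ⟨hp0, hp1⟩
    have habs : |Real.log q - Real.log (1-q)| = Real.log (1-q) - Real.log q := by
      rw [abs_sub_comm]
      exact abs_of_nonneg (sub_nonneg.2 (Real.log_le_log hq0 (by linarith)))
    rw [habs]
    exact h
  · have h := scalar_half (1-q) (by linarith) (by linarith) (1-p) ⟨by linarith, by linarith⟩
    have e1 : (1:ℝ) - (1-q) = q := by ring
    rw [e1] at h
    have hsym : fent (1-p) = fent p := by simp only [fent, sub_sub_cancel]; ring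
    have hsymq : fent (1-q) = fent q := by simp only [fent, sub_sub_cancel]; ring
    have hfd : fdv (1-q) = -(fdv q) := by simp only [fdv, sub_sub_cancel]; ring
    rw [hsym, hsymq, hfd] at h
    have habs : |Real.log q - Real.log (1-q)| = Real.log q - Real.log (1-q) :=
      abs_of_nonneg (sub_nonneg.2 (Real.log_le_log (by linarith) (by linarith)))
    rw [habs]
    have e2 : ((1:ℝ)-p-(1-q))^2 = (p-q)^2 := by ring
    have e3 : -(fdv q) * ((1:ℝ)-p-(1-q)) = fdv q * (p - q) := by ring
    rw [e2, e3] at h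
    exact h


lemma parseval_aux {n : ℕ} (v : Fin n → Fin n → ℝ)
    (h : ∀ i j, v i ⬝ᵥ v j = if i = j then (1:ℝ) else 0) (x y : Fin n → ℝ) :
    x ⬝ᵥ y = ∑ i, (v i ⬝ᵥ x) * (v i ⬝ᵥ y) := by
  have hVVT : (Matrix.of v) * (Matrix.of v)ᵀ = 1 := by
    ext i j
    simpa [Matrix.mul_apply, dotProduct, Matrix.one_apply] using h i j
  have hVTV : (Matrix.of v)ᵀ * (Matrix.of v) = 1 := mul_eq_one_comm.mp hVVT
  have hentry : ∀ a b, (∑ i, v i a * v i b) = if a = b then (1:ℝ) else 0 := by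
    intro a b
    have := congrFun (congrFun hVTV a) b
    simpa [Matrix.mul_apply, Matrix.one_apply] using this
  calc x ⬝ᵥ y = ∑ a, x a * y a := rfl
    _ = ∑ a, ∑ b, (if a = b then (1:ℝ) else 0) * (x a * y b) := by
        apply Finset.sum_congr rfl; intro a _
        simp
    _ = ∑ a, ∑ b, ∑ i, (v i a * x a) * (v i b * y b) := by
        apply Finset.sum_congr rfl; intro a _
        apply Finset.sum_congr rfl; intro b _
        rw [← hentry a b, Finset.sum_mul]
        apply Finset.sum_congr rfl; intro i _
        ring
    _ = ∑ a, ∑ i, ∑ b, (v i a * x a) * (v i b * y b) := by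
        apply Finset.sum_congr rfl; intro a _
        exact Finset.sum_comm
    _ = ∑ i, ∑ a, ∑ b, (v i a * x a) * (v i b * y b) := Finset.sum_comm
    _ = ∑ i, (v i ⬝ᵥ x) * (v i ⬝ᵥ y) := by
        apply Finset.sum_congr rfl; intro i _
        rw [dotProduct, dotProduct, Finset.sum_mul_sum]

lemma vecMulVec_mulVec' {n : ℕ} (v w x : Fin n → ℝ) :
    (vecMulVec v w).mulVec x = (w ⬝ᵥ x) • v := by
  ext a
  simp only [Matrix.mulVec, dotProduct, vecMulVec_apply, Pi.smul_apply, smul_eq_mul]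
  rw [Finset.sum_mul]
  apply Finset.sum_congr rfl; intro b _
  ring

lemma trace_rankOnes {n : ℕ} (v : Fin n → Fin n → ℝ) (d : Fin n → ℝ)
    (B : Matrix (Fin n) (Fin n) ℝ) :
    ((∑ j, d j • vecMulVec (v j) (v j)) * B).trace
      = ∑ j, d j * (v j ⬝ᵥ B.mulVec (v j)) := by
  rw [Finset.sum_mul, Matrix.trace_sum]
  apply Finset.sum_congr rfl; intro j _
  rw [Matrix.smul_mul, Matrix.trace_smul, smul_eq_mul]
  congr 1
  simp only [Matrix.trace, Matrix.diag, Matrix.mul_apply, vecMulVec_apply,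
    Matrix.mulVec, dotProduct, Finset.mul_sum]
  rw [Finset.sum_comm]
  apply Finset.sum_congr rfl; intro a _
  apply Finset.sum_congr rfl; intro b _
  ring

lemma symm_dot {n : ℕ} {A : Matrix (Fin n) (Fin n) ℝ} (hA : Aᵀ = A) (x y : Fin n → ℝ) :
    x ⬝ᵥ A.mulVec y = A.mulVec x ⬝ᵥ y := by
  have hAe : ∀ a b, A a b = A b a := by
    intro a b
    conv_lhs => rw [← hA]
    rfl
  simp only [dotProduct, Matrix.mulVec, dotProduct, Finset.mul_sum, Finset.sum_mul]
  rw [Finset.sum_comm]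
  apply Finset.sum_congr rfl; intro b _
  apply Finset.sum_congr rfl; intro a _
  rw [hAe a b]
  ring

lemma trace_eq_sum_eigenvalues {n : ℕ} {A : Matrix (Fin n) (Fin n) ℝ} (hA : A.IsHermitian) :
    A.trace = ∑ i, hA.eigenvalues i := by
  simpa using hA.trace_eq_sum_eigenvalues

lemma basis_orth {n : ℕ} {A : Matrix (Fin n) (Fin n) ℝ} (hA : A.IsHermitian) (i j : Fin n) :
    (⇑(hA.eigenvectorBasis i) : Fin n → ℝ) ⬝ᵥ ⇑(hA.eigenvectorBasis j)
      = if i = j then (1:ℝ) else 0 := by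
  have h := (orthonormal_iff_ite.mp hA.eigenvectorBasis.orthonormal) i j
  simpa [PiLp.inner_apply, RCLike.inner_apply, conj_trivial, dotProduct, mul_comm] using h

lemma sum_mulVec' {n : ℕ} (A : Fin n → Matrix (Fin n) (Fin n) ℝ) (x : Fin n → ℝ) :
    (∑ j, A j).mulVec x = ∑ j, (A j).mulVec x := by
  ext a
  simp only [Matrix.mulVec, dotProduct, Matrix.sum_apply, Finset.sum_apply,
    Finset.sum_mul]
  rw [Finset.sum_comm]

lemma dotProduct_sum' {n : ℕ} (x : Fin n → ℝ) (v : Fin n → Fin n → ℝ) :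
    x ⬝ᵥ (∑ j, v j) = ∑ j, x ⬝ᵥ v j := by
  simp only [dotProduct, Finset.sum_apply, Finset.mul_sum]
  rw [Finset.sum_comm]


/-- Weighted Frobenius estimate at finite temperature:
`tr(M (P_{β,η} − P_{β,∞})²) ≤ η⁻¹ ‖P_{β,∞}‖₁` where
`M = ∑_i max(β⁻¹, |λ_i − μ|) φ_i φ_iᵀ`. -/
theorem stmt8 {n N : ℕ} (hN1 : 1 ≤ N) (hNn : N < n)
    (H : Matrix (Fin n) (Fin n) ℝ) (hH : H.IsSymm)
    (lam : Fin n → ℝ) (hmono : Monotone lam)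
    (φ : Fin n → Fin n → ℝ)
    (horth : ∀ i j, φ i ⬝ᵥ φ j = if i = j then (1 : ℝ) else 0)
    (heig : ∀ i, H.mulVec (φ i) = lam i • φ i)
    (β : ℝ) (hβ : 0 < β) (μ : ℝ)
    (hμ : ∑ i, (1 + Real.exp (β * (lam i - μ)))⁻¹ = (N : ℝ))
    (ρ : Fin n → ℝ) (hρ : ∀ i, ρ i = (1 + Real.exp (β * (lam i - μ)))⁻¹)
    (Pβ : Matrix (Fin n) (Fin n) ℝ)
    (hPβ : Pβ = ∑ i, ρ i • vecMulVec (φ i) (φ i))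
    (M : Matrix (Fin n) (Fin n) ℝ)
    (hM : M = ∑ i, max β⁻¹ |lam i - μ| • vecMulVec (φ i) (φ i))
    (η : ℝ) (hη : 0 < η)
    (Pβη : Matrix (Fin n) (Fin n) ℝ) (hPβη : Pβη ∈ CN n N)
    (hmin : ∀ P ∈ CN n N,
      freeEnergy β H Pβη + η⁻¹ * l1Norm Pβη ≤ freeEnergy β H P + η⁻¹ * l1Norm P) :
    (M * ((Pβη - Pβ) * (Pβη - Pβ))).trace ≤ η⁻¹ * l1Norm Pβ := by
  classical
  obtain ⟨hQsym, hQtr, hQpsd, hQpsd'⟩ := hPβη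
  -- ρ basics
  have hρpos : ∀ j, 0 < ρ j := by
    intro j; rw [hρ]; positivity
  have hρlt : ∀ j, ρ j < 1 := by
    intro j; rw [hρ]
    have hE : 0 < Real.exp (β * (lam j - μ)) := Real.exp_pos _
    have h1 : (1:ℝ) < 1 + Real.exp (β * (lam j - μ)) := by linarith
    have := inv_lt_one_of_one_lt₀ h1
    exact this
  have hfdρ : ∀ j, fdv (ρ j) = -(β * (lam j - μ)) := by
    intro j
    have hE : 0 < Real.exp (β * (lam j - μ)) := Real.exp_pos _
    have h1E : (0:ℝ) < 1 + Real.exp (β * (lam j - μ)) := by linarith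
    simp only [fdv]
    rw [hρ j]
    have h1mρ : 1 - (1 + Real.exp (β * (lam j - μ)))⁻¹
        = Real.exp (β * (lam j - μ)) / (1 + Real.exp (β * (lam j - μ))) := by
      field_simp; ring
    rw [h1mρ, Real.log_inv, Real.log_div (ne_of_gt hE) (ne_of_gt h1E), Real.log_exp]
    ring
  have hφpars := parseval_aux φ horth
  -- Pβ basics
  have hPβmul : ∀ j, Pβ.mulVec (φ j) = ρ j • φ j := by
    intro j
    rw [hPβ, sum_mulVec']
    have he : ∀ i, (ρ i • vecMulVec (φ i) (φ i)).mulVec (φ j)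
        = (ρ i * (if i = j then (1:ℝ) else 0)) • φ i := by
      intro i
      rw [Matrix.smul_mulVec, vecMulVec_mulVec', horth i j, smul_smul]
    rw [Finset.sum_congr rfl (fun i _ => he i)]
    rw [Finset.sum_eq_single j]
    · simp
    · intro i _ hij; simp [hij]
    · intro h; simp at h
  have hPβsym : Pβᵀ = Pβ := by
    rw [hPβ, Matrix.transpose_sum]
    apply Finset.sum_congr rfl; intro i _
    rw [Matrix.transpose_smul]
    congr 1
    ext a b
    simp [Matrix.transpose_apply, vecMulVec_apply, mul_comm]
  have hPβh : Pβ.IsHermitian := by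
    rw [Matrix.IsHermitian, Matrix.conjTranspose_eq_transpose_of_trivial]
    exact hPβsym
  have hPβquad : ∀ x : Fin n → ℝ, x ⬝ᵥ Pβ.mulVec x = ∑ j, ρ j * (φ j ⬝ᵥ x)^2 := by
    intro x
    rw [hPβ, sum_mulVec', dotProduct_sum']
    apply Finset.sum_congr rfl; intro j _
    rw [Matrix.smul_mulVec, vecMulVec_mulVec']
    rw [dotProduct_smul, dotProduct_smul]
    rw [smul_eq_mul, smul_eq_mul, dotProduct_comm x (φ j)]
    ring
  have hPβtr : Pβ.trace = (N:ℝ) := by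
    rw [hPβ, Matrix.trace_sum]
    have he : ∀ j, (ρ j • vecMulVec (φ j) (φ j)).trace = ρ j := by
      intro j
      rw [Matrix.trace_smul, smul_eq_mul]
      have h2 : (vecMulVec (φ j) (φ j)).trace = φ j ⬝ᵥ φ j := by
        simp [Matrix.trace, Matrix.diag, vecMulVec_apply, dotProduct]
      rw [h2, horth j j]
      simp
    rw [Finset.sum_congr rfl (fun j _ => he j), ← hμ]
    exact Finset.sum_congr rfl fun j _ => hρ j
  have hstar : ∀ x : Fin n → ℝ, star x = x := by
    intro x; funext i; exact star_trivial _
  have hPβCN : Pβ ∈ CN n N := by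
    refine ⟨hPβsym, hPβtr, Matrix.PosSemidef.of_dotProduct_mulVec_nonneg hPβh ?_, Matrix.PosSemidef.of_dotProduct_mulVec_nonneg (Matrix.isHermitian_one.sub hPβh) ?_⟩
    · intro x
      rw [hstar, hPβquad]
      apply Finset.sum_nonneg; intro j _
      exact mul_nonneg (hρpos j).le (sq_nonneg _)
    · intro x
      rw [hstar, Matrix.sub_mulVec, Matrix.one_mulVec, dotProduct_sub, hPβquad]
      rw [hφpars x x]
      have he : ∀ j, (φ j ⬝ᵥ x) * (φ j ⬝ᵥ x) = (φ j ⬝ᵥ x)^2 := fun j => (sq _).symm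
      rw [Finset.sum_congr rfl (fun j _ => he j), ← Finset.sum_sub_distrib]
      apply Finset.sum_nonneg; intro j _
      have := hρlt j
      nlinarith [sq_nonneg (φ j ⬝ᵥ x)]
  -- spectral data of Pβη
  have hQh : Pβη.IsHermitian := by
    rw [Matrix.IsHermitian, Matrix.conjTranspose_eq_transpose_of_trivial]
    exact hQsym
  set p : Fin n → ℝ := hQh.eigenvalues with hpdef
  set u : Fin n → Fin n → ℝ := fun i => ⇑(hQh.eigenvectorBasis i) with hudef
  have hu_orth : ∀ i j, u i ⬝ᵥ u j = if i = j then (1:ℝ) else 0 := fun i j => basis_orth hQh i j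
  have hupars := parseval_aux u hu_orth
  have hQu : ∀ i, Pβη.mulVec (u i) = p i • u i := fun i => hQh.mulVec_eigenvectorBasis i
  have hp0 : ∀ i, 0 ≤ p i := fun i => hQpsd.eigenvalues_nonneg i
  have hp1 : ∀ i, p i ≤ 1 := by
    intro i
    have h := hQpsd'.dotProduct_mulVec_nonneg (u i)
    rw [hstar, Matrix.sub_mulVec, Matrix.one_mulVec, dotProduct_sub, hQu i,
      dotProduct_smul, smul_eq_mul, hu_orth i i] at h
    simp at h
    linarith
  have hSQ : matEntropy Pβη = ∑ i, fent (p i) := by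
    simp only [matEntropy]
    rw [dif_pos hQh]
    rfl
  -- entropy of Pβ
  have hSPβ : matEntropy Pβ = ∑ j, fent (ρ j) := by
    set κ : Fin n → ℝ := hPβh.eigenvalues with hκdef
    set w : Fin n → Fin n → ℝ := fun k => ⇑(hPβh.eigenvectorBasis k) with hwdef
    have hw_orth : ∀ i j, w i ⬝ᵥ w j = if i = j then (1:ℝ) else 0 :=
      fun i j => basis_orth hPβh i j
    have hwpars := parseval_aux w hw_orth
    have hwκ : ∀ k, Pβ.mulVec (w k) = κ k • w k := fun k => hPβh.mulVec_eigenvectorBasis k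
    have hkey : ∀ k j, (w k ⬝ᵥ φ j) ≠ 0 → κ k = ρ j := by
      intro k j hne
      have e1 : Pβ.mulVec (w k) ⬝ᵥ φ j = w k ⬝ᵥ Pβ.mulVec (φ j) := (symm_dot hPβsym _ _).symm
      rw [hwκ, hPβmul, smul_dotProduct, dotProduct_smul,
        smul_eq_mul, smul_eq_mul] at e1
      exact mul_right_cancel₀ hne e1
    simp only [matEntropy]
    rw [dif_pos hPβh]
    calc (∑ k, (hPβh.eigenvalues k * Real.log (hPβh.eigenvalues k) +
          (1 - hPβh.eigenvalues k) * Real.log (1 - hPβh.eigenvalues k)))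
        = ∑ k, fent (κ k) := rfl
      _ = ∑ k, (∑ j, (w k ⬝ᵥ φ j)^2) * fent (κ k) := by
          apply Finset.sum_congr rfl; intro k _
          have h1 : (∑ j, (w k ⬝ᵥ φ j)^2) = 1 := by
            have h2 := hφpars (w k) (w k)
            rw [hw_orth k k] at h2
            simp only [if_pos rfl] at h2
            rw [show (∑ j, (w k ⬝ᵥ φ j)^2) = ∑ j, (φ j ⬝ᵥ w k) * (φ j ⬝ᵥ w k) from
              Finset.sum_congr rfl fun j _ => by rw [dotProduct_comm, sq]]
            exact h2.symm
          rw [h1, one_mul]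
      _ = ∑ k, ∑ j, (w k ⬝ᵥ φ j)^2 * fent (ρ j) := by
          apply Finset.sum_congr rfl; intro k _
          rw [Finset.sum_mul]
          apply Finset.sum_congr rfl; intro j _
          by_cases hz : (w k ⬝ᵥ φ j) = 0
          · rw [hz]; ring
          · rw [hkey k j hz]
      _ = ∑ j, ∑ k, (w k ⬝ᵥ φ j)^2 * fent (ρ j) := Finset.sum_comm
      _ = ∑ j, fent (ρ j) := by
          apply Finset.sum_congr rfl; intro j _
          rw [← Finset.sum_mul]
          have h1 : (∑ k, (w k ⬝ᵥ φ j)^2) = 1 := by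
            have h2 := hwpars (φ j) (φ j)
            rw [horth j j] at h2
            simp only [if_pos rfl] at h2
            rw [show (∑ k, (w k ⬝ᵥ φ j)^2) = ∑ k, (w k ⬝ᵥ φ j) * (w k ⬝ᵥ φ j) from
              Finset.sum_congr rfl fun k _ => sq _]
            exact h2.symm
          rw [h1, one_mul]
  -- the overlap coefficients
  set C : Fin n → Fin n → ℝ := fun i j => (u i ⬝ᵥ φ j)^2 with hCdef
  have hC0 : ∀ i j, 0 ≤ C i j := fun i j => sq_nonneg _
  have hCcol : ∀ j, ∑ i, C i j = 1 := by
    intro j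
    have h2 := hupars (φ j) (φ j)
    rw [horth j j] at h2
    simp only [if_pos rfl] at h2
    rw [show (∑ i, C i j) = ∑ i, (u i ⬝ᵥ φ j) * (u i ⬝ᵥ φ j) from
      Finset.sum_congr rfl fun i _ => sq _]
    exact h2.symm
  have hCrow : ∀ i, ∑ j, C i j = 1 := by
    intro i
    have h2 := hφpars (u i) (u i)
    rw [hu_orth i i] at h2
    simp only [if_pos rfl] at h2
    calc ∑ j, C i j = ∑ j, (φ j ⬝ᵥ u i) * (φ j ⬝ᵥ u i) := by
          apply Finset.sum_congr rfl; intro j _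
          show (u i ⬝ᵥ φ j)^2 = _
          rw [dotProduct_comm, pow_two]
      _ = 1 := h2.symm
  have huQφ : ∀ i j, u i ⬝ᵥ Pβη.mulVec (φ j) = p i * (u i ⬝ᵥ φ j) := by
    intro i j
    rw [symm_dot hQsym, hQu i, smul_dotProduct, smul_eq_mul]
  have hΔdot : ∀ i j, u i ⬝ᵥ (Pβη - Pβ).mulVec (φ j) = (p i - ρ j) * (u i ⬝ᵥ φ j) := by
    intro i j
    rw [Matrix.sub_mulVec, dotProduct_sub, huQφ, hPβmul, dotProduct_smul,
      smul_eq_mul]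
    ring
  have hΔsym : (Pβη - Pβ)ᵀ = Pβη - Pβ := by
    rw [Matrix.transpose_sub, hPβsym]
    rw [show Pβηᵀ = Pβη from hQsym]
  have hΔquad : ∀ j, φ j ⬝ᵥ ((Pβη - Pβ) * (Pβη - Pβ)).mulVec (φ j)
      = ∑ i, C i j * (p i - ρ j)^2 := by
    intro j
    rw [← Matrix.mulVec_mulVec, symm_dot hΔsym, hupars]
    apply Finset.sum_congr rfl; intro i _
    rw [hΔdot i j]
    simp only [hCdef]
    ring
  have hMtr : (M * ((Pβη - Pβ) * (Pβη - Pβ))).trace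
      = ∑ j, max β⁻¹ |lam j - μ| * (∑ i, C i j * (p i - ρ j)^2) := by
    rw [hM, trace_rankOnes]
    exact Finset.sum_congr rfl fun j _ => by rw [hΔquad j]
  -- H-decomposition
  have hone : (∑ j, vecMulVec (φ j) (φ j)) = (1 : Matrix (Fin n) (Fin n) ℝ) := by
    ext a b
    have h2 := hφpars (Pi.single a 1) (Pi.single b 1)
    simp only [dotProduct_single, single_dotProduct, mul_one, one_mul,
      Pi.single_apply] at h2
    rw [Matrix.sum_apply]
    simp only [vecMulVec_apply, Matrix.one_apply]
    rw [← h2]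
    by_cases hab : a = b <;> simp [hab, eq_comm]
  have hHdec : H = ∑ j, lam j • vecMulVec (φ j) (φ j) := by
    calc H = H * 1 := (Matrix.mul_one H).symm
      _ = H * (∑ j, vecMulVec (φ j) (φ j)) := by rw [hone]
      _ = ∑ j, H * vecMulVec (φ j) (φ j) := Finset.mul_sum _ _ _
      _ = ∑ j, lam j • vecMulVec (φ j) (φ j) := by
          apply Finset.sum_congr rfl; intro j _
          have h1 : H * vecMulVec (φ j) (φ j) = vecMulVec (H.mulVec (φ j)) (φ j) := by
            ext a b
            simp only [Matrix.mul_apply, vecMulVec_apply, Matrix.mulVec, dotProduct,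
              Finset.sum_mul]
            apply Finset.sum_congr rfl; intro c _
            ring
          rw [h1, heig j]
          ext a b
          simp only [vecMulVec_apply, Matrix.smul_apply, Pi.smul_apply, smul_eq_mul]
          ring
  have hφQ : ∀ j, φ j ⬝ᵥ Pβη.mulVec (φ j) = ∑ i, C i j * p i := by
    intro j
    rw [hupars (φ j) (Pβη.mulVec (φ j))]
    apply Finset.sum_congr rfl; intro i _
    rw [huQφ]
    simp only [hCdef]
    ring
  have hHQ : (H * Pβη).trace = ∑ j, lam j * (∑ i, C i j * p i) := by
    conv_lhs => rw [hHdec]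
    rw [trace_rankOnes]
    exact Finset.sum_congr rfl fun j _ => by rw [hφQ j]
  have hHPβ : (H * Pβ).trace = ∑ j, lam j * ρ j := by
    conv_lhs => rw [hHdec]
    rw [trace_rankOnes]
    apply Finset.sum_congr rfl; intro j _
    rw [hPβmul j, dotProduct_smul, smul_eq_mul, horth j j]
    simp
  have htrQ : ∑ i, p i = (N:ℝ) := by
    rw [← trace_eq_sum_eigenvalues hQh, hQtr]
  have htrρ : ∑ j, ρ j = (N:ℝ) := by
    rw [← hμ]; exact Finset.sum_congr rfl fun j _ => hρ j
  -- pointwise scalar estimate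
  have hmax : ∀ j, β * max β⁻¹ |lam j - μ| = max 1 |fdv (ρ j)| := by
    intro j
    rw [hfdρ j, abs_neg, abs_mul, abs_of_pos hβ, mul_max_of_nonneg _ _ hβ.le,
      mul_inv_cancel₀ (ne_of_gt hβ)]
  have hpoint : ∀ i j, max β⁻¹ |lam j - μ| * (C i j * (p i - ρ j)^2)
      ≤ β⁻¹ * (C i j * (fent (p i) - fent (ρ j) - fdv (ρ j) * (p i - ρ j))) := by
    intro i j
    have hs := scalar_main (ρ j) (p i) (hρpos j) (hρlt j) (hp0 i) (hp1 i)
    have habs : |Real.log (ρ j) - Real.log (1 - ρ j)| = |fdv (ρ j)| := rfl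
    rw [habs] at hs
    have h2 := mul_le_mul_of_nonneg_left hs
      (mul_nonneg (inv_nonneg.2 hβ.le) (hC0 i j))
    calc max β⁻¹ |lam j - μ| * (C i j * (p i - ρ j)^2)
        = (β⁻¹ * C i j) * (max 1 |fdv (ρ j)| * (p i - ρ j)^2) := by
          rw [← hmax j]
          field_simp
      _ ≤ (β⁻¹ * C i j) * (fent (p i) - fent (ρ j) - fdv (ρ j) * (p i - ρ j)) := h2
      _ = β⁻¹ * (C i j * (fent (p i) - fent (ρ j) - fdv (ρ j) * (p i - ρ j))) := by ring
  -- sum identity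
  have hgsum : ∑ j, ∑ i, C i j * (fent (p i) - fent (ρ j) - fdv (ρ j) * (p i - ρ j))
      = (∑ i, fent (p i)) - (∑ j, fent (ρ j))
        - ∑ j, fdv (ρ j) * ((∑ i, C i j * p i) - ρ j) := by
    have e1 : ∀ j, ∑ i, C i j * (fent (p i) - fent (ρ j) - fdv (ρ j) * (p i - ρ j))
        = (∑ i, C i j * fent (p i)) - fent (ρ j)
          - fdv (ρ j) * ((∑ i, C i j * p i) - ρ j) := by
      intro j
      have e2 : ∀ i, C i j * (fent (p i) - fent (ρ j) - fdv (ρ j) * (p i - ρ j))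
          = C i j * fent (p i) - C i j * fent (ρ j)
            - (fdv (ρ j) * (C i j * p i) - fdv (ρ j) * (C i j * ρ j)) := by
        intro i; ring
      rw [Finset.sum_congr rfl fun i _ => e2 i]
      rw [Finset.sum_sub_distrib, Finset.sum_sub_distrib, Finset.sum_sub_distrib]
      rw [show (∑ i, C i j * fent (ρ j)) = fent (ρ j) from by
            rw [← Finset.sum_mul, hCcol j, one_mul],
        show (∑ i, fdv (ρ j) * (C i j * p i)) = fdv (ρ j) * (∑ i, C i j * p i) from
          (Finset.mul_sum _ _ _).symm,
        show (∑ i, fdv (ρ j) * (C i j * ρ j)) = fdv (ρ j) * ρ j from by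
          rw [← Finset.mul_sum, show (∑ i, C i j * ρ j) = ρ j from by
            rw [← Finset.sum_mul, hCcol j, one_mul]]]
      ring
    rw [Finset.sum_congr rfl fun j _ => e1 j]
    rw [Finset.sum_sub_distrib, Finset.sum_sub_distrib]
    have e3 : ∑ j, ∑ i, C i j * fent (p i) = ∑ i, fent (p i) := by
      rw [Finset.sum_comm]
      apply Finset.sum_congr rfl; intro i _
      rw [← Finset.sum_mul, hCrow i, one_mul]
    rw [e3]
  -- free-energy difference
  have hEdiff : freeEnergy β H Pβη - freeEnergy β H Pβ
      = β⁻¹ * ∑ j, ∑ i, C i j * (fent (p i) - fent (ρ j) - fdv (ρ j) * (p i - ρ j)) := by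
    rw [hgsum, freeEnergy, freeEnergy, hSQ, hSPβ, hHQ, hHPβ]
    have hTsum : ∑ j, ∑ i, C i j * p i = (N:ℝ) := by
      rw [Finset.sum_comm]
      rw [show (∑ i, ∑ j, C i j * p i) = ∑ i, p i from
        Finset.sum_congr rfl fun i _ => by rw [← Finset.sum_mul, hCrow i, one_mul]]
      exact htrQ
    have h1 : β⁻¹ * ∑ j, fdv (ρ j) * ((∑ i, C i j * p i) - ρ j)
        = ∑ j, (-(lam j - μ)) * ((∑ i, C i j * p i) - ρ j) := by
      rw [Finset.mul_sum]
      apply Finset.sum_congr rfl; intro j _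
      rw [← mul_assoc, show β⁻¹ * fdv (ρ j) = -(lam j - μ) from by
        rw [hfdρ j]; field_simp]
    have h2 : ∑ j, (-(lam j - μ)) * ((∑ i, C i j * p i) - ρ j)
        = (∑ j, lam j * ρ j) - (∑ j, lam j * (∑ i, C i j * p i))
          + μ * ((∑ j, ∑ i, C i j * p i) - ∑ j, ρ j) := by
      have e : ∀ j, (-(lam j - μ)) * ((∑ i, C i j * p i) - ρ j)
          = (lam j * ρ j - lam j * (∑ i, C i j * p i))
            + (μ * (∑ i, C i j * p i) - μ * ρ j) := by
        intro j; ring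
      rw [Finset.sum_congr rfl fun j _ => e j, Finset.sum_add_distrib,
        Finset.sum_sub_distrib, Finset.sum_sub_distrib, ← Finset.mul_sum, ← Finset.mul_sum]
      ring
    have h3 : β⁻¹ * ∑ j, fdv (ρ j) * ((∑ i, C i j * p i) - ρ j)
        = (∑ j, lam j * ρ j) - (∑ j, lam j * (∑ i, C i j * p i)) := by
      rw [h1, h2, hTsum, htrρ]
      ring
    linear_combination h3
  -- conclusion
  have hl1 : 0 ≤ l1Norm Pβη := by
    apply Finset.sum_nonneg; intro i _
    apply Finset.sum_nonneg; intro j _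
    exact abs_nonneg _
  have hminPβ := hmin Pβ hPβCN
  calc (M * ((Pβη - Pβ) * (Pβη - Pβ))).trace
      = ∑ j, max β⁻¹ |lam j - μ| * (∑ i, C i j * (p i - ρ j)^2) := hMtr
    _ = ∑ j, ∑ i, max β⁻¹ |lam j - μ| * (C i j * (p i - ρ j)^2) := by
        apply Finset.sum_congr rfl; intro j _
        rw [Finset.mul_sum]
    _ ≤ ∑ j, ∑ i, β⁻¹ * (C i j * (fent (p i) - fent (ρ j) - fdv (ρ j) * (p i - ρ j))) := by
        apply Finset.sum_le_sum; intro j _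
        apply Finset.sum_le_sum; intro i _
        exact hpoint i j
    _ = β⁻¹ * ∑ j, ∑ i, C i j * (fent (p i) - fent (ρ j) - fdv (ρ j) * (p i - ρ j)) := by
        rw [Finset.mul_sum]
        apply Finset.sum_congr rfl; intro j _
        rw [Finset.mul_sum]
    _ = freeEnergy β H Pβη - freeEnergy β H Pβ := hEdiff.symm
    _ ≤ η⁻¹ * l1Norm Pβ - η⁻¹ * l1Norm Pβη := by linarith
    _ ≤ η⁻¹ * l1Norm Pβ := by
        have h4 : 0 ≤ η⁻¹ * l1Norm Pβη := mul_nonneg (inv_nonneg.2 hη.le) hl1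
        linarith
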